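/- For every q > 0, the functions x ↦ x·ψ_q(x) and x ↦ x·Γ'_q(x) are increasing (monotone nondecreasing) on the interval [1, ∞), where Γ'_q denotes the derivative of the q-gamma function Γ_q. -/

import Mathlib

open Real

open Set Filter Topology

variable {q : ℝ}


lemma aux_exp_neg_le {t : ℝ} (ht : 0 ≤ t) : exp (-t) ≤ 1 - t + t ^ 2 := by
  have h1 : t + 1 ≤ exp t := Real.add_one_le_exp t
  have h2 : exp (-t) * exp t = 1 := by rw [← Real.exp_add]; simp
  nlinarith [exp_pos (-t), exp_pos t, sq_nonneg t, mul_pos (exp_pos (-t)) (exp_pos t)]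

lemma aux_monotoneOn_of_hasDerivAt {f f' : ℝ → ℝ} {s : Set ℝ} (hs : Convex ℝ s)
    (hf : ∀ x ∈ s, HasDerivAt f (f' x) x) (h : ∀ x ∈ s, 0 ≤ f' x) : MonotoneOn f s := by
  apply monotoneOn_of_deriv_nonneg hs
  · exact fun x hx => (hf x hx).continuousAt.continuousWithinAt
  · exact fun x hx => ((hf x (interior_subset hx)).differentiableAt).differentiableWithinAt
  · intro x hx
    rw [(hf x (interior_subset hx)).deriv]
    exact h x (interior_subset hx)

lemma aux_mono_mul_deriv (f ψ : ℝ → ℝ)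
    (hf : ∀ x ∈ Ici (1:ℝ), HasDerivAt f (f x * ψ x) x)
    (hpos : ∀ x ∈ Ici (1:ℝ), 0 < f x)
    (hψ : MonotoneOn ψ (Ici 1))
    (hxψ : MonotoneOn (fun x => x * ψ x) (Ici 1)) :
    MonotoneOn (fun x : ℝ => x * deriv f x) (Ici 1) := by
  intro x hx y hy hxy
  simp only [Set.mem_Ici] at hx hy
  have hIcc : Icc x y ⊆ Ici (1:ℝ) := fun t ht => le_trans hx ht.1
  have hdx : deriv f x = f x * ψ x := (hf x hx).deriv
  have hdy : deriv f y = f y * ψ y := (hf y hy).deriv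
  simp only [hdx, hdy]
  have hx0 : (0:ℝ) < x := lt_of_lt_of_le one_pos hx
  have hy0 : (0:ℝ) < y := lt_of_lt_of_le one_pos hy
  have hfx := hpos x hx
  have hfy := hpos y hy
  have key : f x * (x * ψ x) ≤ f y * (y * ψ y) := by
    rcases le_or_gt 0 (ψ x) with hψx | hψx
    · -- f monotone on Icc x y
      have hmono : MonotoneOn f (Icc x y) := by
        apply aux_monotoneOn_of_hasDerivAt (convex_Icc x y)
          (fun t ht => hf t (hIcc ht))
        intro t ht
        have ht1 : (1:ℝ) ≤ t := hIcc ht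
        exact mul_nonneg (hpos t ht1).le (le_trans hψx (hψ hx ht1 ht.1))
      have h1 : f x ≤ f y := hmono (left_mem_Icc.2 hxy) (right_mem_Icc.2 hxy) hxy
      have h2 : x * ψ x ≤ y * ψ y := hxψ hx hy hxy
      have h3 : 0 ≤ x * ψ x := mul_nonneg hx0.le hψx
      calc f x * (x * ψ x) ≤ f y * (x * ψ x) := mul_le_mul_of_nonneg_right h1 h3
        _ ≤ f y * (y * ψ y) := mul_le_mul_of_nonneg_left h2 hfy.le
    · rcases le_or_gt 0 (y * ψ y) with hyy | hyy
      · have : f x * (x * ψ x) ≤ 0 :=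
          mul_nonpos_of_nonneg_of_nonpos hfx.le (mul_nonpos_of_nonneg_of_nonpos hx0.le hψx.le)
        exact le_trans this (mul_nonneg hfy.le hyy)
      · have hψy : ψ y < 0 := by
          by_contra hcon
          exact absurd (mul_nonneg hy0.le (not_lt.1 hcon)) (not_le.2 hyy)
        have hanti : AntitoneOn f (Icc x y) := by
          have := aux_monotoneOn_of_hasDerivAt (f := fun t => -f t)
            (f' := fun t => -(f t * ψ t)) (convex_Icc x y)
            (fun t ht => (hf t (hIcc ht)).neg)
            (by
              intro t ht
              have ht1 : (1:ℝ) ≤ t := hIcc ht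
              have : ψ t ≤ 0 := le_trans (hψ ht1 hy ht.2) hψy.le
              have h4 := mul_nonpos_of_nonneg_of_nonpos (hpos t ht1).le this
              simpa using neg_nonneg.2 h4)
          intro a ha b hb hab
          have := this ha hb hab
          simpa using this
        have h1 : f y ≤ f x := hanti (left_mem_Icc.2 hxy) (right_mem_Icc.2 hxy) hxy
        have h2 : x * ψ x ≤ y * ψ y := hxψ hx hy hxy
        calc f x * (x * ψ x) ≤ f x * (y * ψ y) := mul_le_mul_of_nonneg_left h2 hfx.le
          _ ≤ f y * (y * ψ y) := by nlinarith
  linarith [key, mul_comm (f x) (x * ψ x), mul_comm (f y) (y * ψ y)]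

variable {q : ℝ}

-- exponent ≥ 1 gives q^a ≤ q, etc.
lemma qpow_le (hq0 : 0 < q) (hq1 : q < 1) {a b : ℝ} (hab : a ≤ b) : q ^ b ≤ q ^ a :=
  Real.rpow_le_rpow_of_exponent_ge hq0 hq1.le hab

lemma qpow_lt_one (hq0 : 0 < q) (hq1 : q < 1) {a : ℝ} (ha : 0 < a) : q ^ a < 1 :=
  Real.rpow_lt_one hq0.le hq1 ha

lemma one_sub_qpow_pos (hq0 : 0 < q) (hq1 : q < 1) {a : ℝ} (ha : 0 < a) : 0 < 1 - q ^ a := by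
  linarith [qpow_lt_one hq0 hq1 ha]

lemma nq_pos (n : ℕ) : (0:ℝ) < (n:ℝ) + 1 := by positivity

lemma summable_S (hq0 : 0 < q) (hq1 : q < 1) {x : ℝ} (hx : 0 < x) :
    Summable (fun n : ℕ => q ^ (((n:ℝ)+1)*x) / (1 - q ^ ((n:ℝ)+1))) := by
  have hr0 : (0:ℝ) < q ^ x := Real.rpow_pos_of_pos hq0 x
  have hr1 : q ^ x < 1 := qpow_lt_one hq0 hq1 hx
  have h1q : (0:ℝ) < 1 - q := by linarith
  apply Summable.of_nonneg_of_le (f := fun n : ℕ => (q ^ x * (q ^ x) ^ n) / (1 - q))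
  · intro n
    exact div_nonneg (Real.rpow_pos_of_pos hq0 _).le
      (one_sub_qpow_pos hq0 hq1 (nq_pos n)).le
  · intro n
    have hnum : q ^ (((n:ℝ)+1)*x) = q ^ x * (q ^ x) ^ n := by
      rw [show ((n:ℝ)+1)*x = x * (n:ℝ) + x by ring, Real.rpow_add hq0, mul_comm]
      congr 1
      rw [Real.rpow_mul hq0.le, Real.rpow_natCast]
    rw [hnum]
    have hden : 1 - q ≤ 1 - q ^ ((n:ℝ)+1) := by
      have : q ^ ((n:ℝ)+1) ≤ q ^ (1:ℝ) := qpow_le hq0 hq1 (by linarith [Nat.cast_nonneg (α := ℝ) n])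
      rw [Real.rpow_one] at this; linarith
    apply div_le_div_of_nonneg_left _ h1q hden    -- might be wrong name; fallback gcongr
    positivity
  · exact ((summable_geometric_of_lt_one hr0.le hr1).mul_left _).div_const _

lemma summable_V (hq0 : 0 < q) (hq1 : q < 1) {x : ℝ} (hx : 0 < x) :
    Summable (fun n : ℕ => q ^ ((n:ℝ)+x) / (1 - q ^ ((n:ℝ)+x))) := by
  have hr1 : q ^ x < 1 := qpow_lt_one hq0 hq1 hx
  have h1q : (0:ℝ) < 1 - q ^ x := by linarith
  apply Summable.of_nonneg_of_le (f := fun n : ℕ => (q ^ x * q ^ n) / (1 - q ^ x))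
  · intro n
    have hp : (0:ℝ) < (n:ℝ) + x := by positivity
    exact div_nonneg (Real.rpow_pos_of_pos hq0 _).le (one_sub_qpow_pos hq0 hq1 hp).le
  · intro n
    have hnum : q ^ ((n:ℝ)+x) = q ^ x * q ^ n := by
      rw [Real.rpow_add hq0, Real.rpow_natCast, mul_comm]
    have hle : q ^ ((n:ℝ)+x) ≤ q ^ x := qpow_le hq0 hq1 (by linarith [Nat.cast_nonneg (α := ℝ) n])
    have hden : 1 - q ^ x ≤ 1 - q ^ ((n:ℝ)+x) := by linarith
    rw [← hnum]
    apply div_le_div_of_nonneg_left (Real.rpow_pos_of_pos hq0 _).le h1q hden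
  · exact ((summable_geometric_of_lt_one hq0.le hq1).mul_left _).div_const _


/-- The `q`-digamma function `ψ_q(x)`. For `0 < q < 1`,
`ψ_q(x) = -log(1-q) + (log q) ∑_{n≥1} q^{n x}/(1-q^n)`; for `q > 1`,
`ψ_q(x) = -log(q-1) + (log q)(x - 1/2 - ∑_{n≥1} q^{-n x}/(1-q^{-n}))`;
for `q = 1` it is the classical digamma function `(log ∘ Γ)'`. -/
noncomputable def qDigamma (q x : ℝ) : ℝ :=
  if q < 1 then
    -Real.log (1 - q) +
      Real.log q * ∑' n : ℕ, q ^ (((n : ℝ) + 1) * x) / (1 - q ^ ((n : ℝ) + 1))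
  else if 1 < q then
    -Real.log (q - 1) +
      Real.log q *
        (x - 1 / 2 - ∑' n : ℕ, q ^ (-(((n : ℝ) + 1) * x)) / (1 - q ^ (-((n : ℝ) + 1))))
  else
    deriv (fun y : ℝ => Real.log (Real.Gamma y)) x

/-- The `q`-gamma function `Γ_q(x)`. For `0 < q < 1`,
`Γ_q(x) = (1-q)^{1-x} ∏_{n≥0} (1-q^{n+1})/(1-q^{n+x})`; for `q > 1`,
`Γ_q(x) = (q-1)^{1-x} q^{x(x-1)/2} ∏_{n≥0} (1-q^{-(n+1)})/(1-q^{-(n+x)})`;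
for `q = 1` it is Euler's Gamma function. -/
noncomputable def qGamma (q x : ℝ) : ℝ :=
  if q < 1 then
    (1 - q) ^ (1 - x) * ∏' n : ℕ, (1 - q ^ ((n : ℝ) + 1)) / (1 - q ^ ((n : ℝ) + x))
  else if 1 < q then
    (q - 1) ^ (1 - x) * q ^ (x * (x - 1) / 2) *
      ∏' n : ℕ, (1 - q ^ (-((n : ℝ) + 1))) / (1 - q ^ (-((n : ℝ) + x)))
  else
    Real.Gamma x


noncomputable def F1 (q : ℝ) (n : ℕ) (x : ℝ) : ℝ :=
  x * (q ^ ((n:ℝ)+1) / ((n:ℝ)+1)) +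
    Real.log q * x * (q ^ (((n:ℝ)+1)*x) / (1 - q ^ ((n:ℝ)+1)))

lemma hasDerivAt_rpow_mul (hq0 : 0 < q) (m t : ℝ) :
    HasDerivAt (fun y : ℝ => q ^ (m*y)) (m * Real.log q * q ^ (m*t)) t := by
  have h : (fun y : ℝ => q ^ (m*y)) = fun y => exp ((m * Real.log q) * y) := by
    funext y; rw [Real.rpow_def_of_pos hq0]; ring_nf
  have H : HasDerivAt (fun y : ℝ => exp ((m * Real.log q) * y))
      (exp ((m * Real.log q) * t) * (m * Real.log q)) t := by
    simpa using ((hasDerivAt_id t).const_mul (m * Real.log q)).exp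
  rw [h]
  convert H using 1
  rw [Real.rpow_def_of_pos hq0]; ring_nf

lemma hasDerivAt_rpow_add (hq0 : 0 < q) (c t : ℝ) :
    HasDerivAt (fun y : ℝ => q ^ (c + y)) (Real.log q * q ^ (c+t)) t := by
  have h : (fun y : ℝ => q ^ (c + y)) = fun y => exp (Real.log q * c + Real.log q * y) := by
    funext y; rw [Real.rpow_def_of_pos hq0]; ring_nf
  have H : HasDerivAt (fun y : ℝ => exp (Real.log q * c + Real.log q * y))
      (exp (Real.log q * c + Real.log q * t) * (Real.log q)) t := by
    simpa using (((hasDerivAt_id t).const_mul (Real.log q)).const_add (Real.log q * c)).exp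
  rw [h]
  convert H using 1
  rw [Real.rpow_def_of_pos hq0]; ring_nf

lemma F1_deriv_nonneg (hq0 : 0 < q) (hq1 : q < 1) (n : ℕ) {t : ℝ} (ht : 1 ≤ t) :
    0 ≤ q ^ ((n:ℝ)+1) / ((n:ℝ)+1) +
      Real.log q * ((1 + t * (((n:ℝ)+1) * Real.log q)) * q ^ (((n:ℝ)+1)*t)) /
        (1 - q ^ ((n:ℝ)+1)) := by
  set m : ℝ := (n:ℝ) + 1 with hm
  have hm1 : (1:ℝ) ≤ m := by simp only [hm]; linarith [Nat.cast_nonneg (α := ℝ) n]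
  have hm0 : (0:ℝ) < m := lt_of_lt_of_le one_pos hm1
  set L : ℝ := -Real.log q with hL
  have hLpos : 0 < L := by
    simp only [hL]
    linarith [Real.log_neg hq0 hq1]
  have hlogq : Real.log q = -L := by simp [hL]
  set c : ℝ := q ^ m with hc
  set d : ℝ := q ^ (m * t) with hd
  have hc0 : 0 < c := Real.rpow_pos_of_pos hq0 _
  have hc1 : c < 1 := qpow_lt_one hq0 hq1 hm0
  have hd0 : 0 < d := Real.rpow_pos_of_pos hq0 _
  have hdc : d ≤ c := by
    apply qpow_le hq0 hq1
    nlinarith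
  have h1c : 0 < 1 - c := by linarith
  have hexp : c = exp (-(m * L)) := by
    rw [hc, Real.rpow_def_of_pos hq0, hlogq]; ring_nf
  have haux : m * L * (1 - m * L) ≤ 1 - c := by
    have := aux_exp_neg_le (mul_nonneg hm0.le hLpos.le)
    rw [← hexp] at this
    nlinarith
  have key : 0 ≤ c / m - L * (1 - t * m * L) * d / (1 - c) := by
    rcases le_or_gt (1 - t * m * L) 0 with hcase | hcase
    · have h2 : L * (1 - t * m * L) * d ≤ 0 :=
        mul_nonpos_of_nonpos_of_nonneg (mul_nonpos_of_nonneg_of_nonpos hLpos.le hcase) hd0.le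
      have : L * (1 - t * m * L) * d / (1 - c) ≤ 0 := div_nonpos_of_nonpos_of_nonneg h2 h1c.le
      have : 0 ≤ c / m := by positivity
      linarith
    · have hmL : m * L ≤ t * m * L := by nlinarith [mul_nonneg (sub_nonneg.2 ht) (mul_nonneg hm0.le hLpos.le)]
      have h2 : 1 - t * m * L ≤ 1 - m * L := by linarith
      have e1 : L * (1 - t * m * L) * d ≤ L * (1 - m * L) * c := by
        have hA : 0 ≤ L * (1 - t * m * L) := mul_nonneg hLpos.le hcase.le
        have hB : L * (1 - t * m * L) ≤ L * (1 - m * L) :=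
          mul_le_mul_of_nonneg_left h2 hLpos.le
        calc L * (1 - t * m * L) * d ≤ L * (1 - t * m * L) * c :=
              mul_le_mul_of_nonneg_left hdc hA
          _ ≤ L * (1 - m * L) * c := mul_le_mul_of_nonneg_right hB hc0.le
      have key2 : L * (1 - t * m * L) * d * m ≤ c * (1 - c) := by
        have e2 : L * (1 - t * m * L) * d * m ≤ L * (1 - m * L) * c * m :=
          mul_le_mul_of_nonneg_right e1 hm0.le
        nlinarith
      rw [sub_nonneg, div_le_div_iff₀ h1c hm0]
      linarith [key2]
  have : q ^ m / m + Real.log q * ((1 + t * (m * Real.log q)) * q ^ (m*t)) / (1 - q ^ m)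
      = c / m - L * (1 - t * m * L) * d / (1 - c) := by
    rw [hlogq, ← hc, ← hd]; ring
  linarith [key, this.ge]

lemma F1_mono (hq0 : 0 < q) (hq1 : q < 1) (n : ℕ) : MonotoneOn (F1 q n) (Ici 1) := by
  have h1c : (0:ℝ) < 1 - q ^ ((n:ℝ)+1) := one_sub_qpow_pos hq0 hq1 (nq_pos n)
  apply aux_monotoneOn_of_hasDerivAt (convex_Ici 1)
    (f' := fun t => q ^ ((n:ℝ)+1) / ((n:ℝ)+1) +
      Real.log q * ((1 + t * (((n:ℝ)+1) * Real.log q)) * q ^ (((n:ℝ)+1)*t)) /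
        (1 - q ^ ((n:ℝ)+1)))
  · intro t ht
    have h2 : HasDerivAt (fun x : ℝ => x * q ^ (((n:ℝ)+1)*x))
        (1 * q ^ (((n:ℝ)+1)*t) + t * (((n:ℝ)+1) * Real.log q * q ^ (((n:ℝ)+1)*t))) t :=
      (hasDerivAt_id t).mul (hasDerivAt_rpow_mul hq0 _ t)
    have h3 := h2.const_mul (Real.log q / (1 - q ^ ((n:ℝ)+1)))
    have h1 : HasDerivAt (fun x : ℝ => x * (q ^ ((n:ℝ)+1) / ((n:ℝ)+1)))
        (q ^ ((n:ℝ)+1) / ((n:ℝ)+1)) t := by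
      simpa using (hasDerivAt_id t).mul_const (q ^ ((n:ℝ)+1) / ((n:ℝ)+1))
    have h4 := h1.add h3
    have hfun : F1 q n = fun x : ℝ => x * (q ^ ((n:ℝ)+1) / ((n:ℝ)+1)) +
        Real.log q / (1 - q ^ ((n:ℝ)+1)) * (x * q ^ (((n:ℝ)+1)*x)) := by
      funext x; simp only [F1]; ring
    rw [hfun]
    refine h4.congr_deriv ?_
    ring
  · intro t ht
    exact F1_deriv_nonneg hq0 hq1 n ht

lemma hasSum_xpsi (hq0 : 0 < q) (hq1 : q < 1) {x : ℝ} (hx : 0 < x) :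
    HasSum (fun n : ℕ => F1 q n x) (x * qDigamma q x) := by
  have hA : HasSum (fun n : ℕ => q ^ ((n:ℝ)+1) / ((n:ℝ)+1)) (-Real.log (1-q)) := by
    have h := Real.hasSum_pow_div_log_of_abs_lt_one (x := q) (by rw [abs_of_pos hq0]; exact hq1)
    have heq : (fun n : ℕ => q ^ ((n:ℝ)+1) / ((n:ℝ)+1)) =
        fun n : ℕ => q ^ (n+1) / ((n:ℝ)+1) := by
      funext n
      congr 1
      rw [← Real.rpow_natCast q (n+1)]
      norm_num
    rw [heq]
    convert h using 2 with n
  have hS := (summable_S hq0 hq1 hx).hasSum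
  have hsum := (hA.mul_left x).add (hS.mul_left (Real.log q * x))
  have hfun : (fun n : ℕ => F1 q n x) = fun n : ℕ =>
      x * (q ^ ((n:ℝ)+1) / ((n:ℝ)+1)) +
        (Real.log q * x) * (q ^ (((n:ℝ)+1)*x) / (1 - q ^ ((n:ℝ)+1))) := by
    funext n; simp only [F1]
  have hval : x * qDigamma q x = x * (-Real.log (1-q)) +
      (Real.log q * x) * ∑' n : ℕ, q ^ (((n:ℝ)+1)*x) / (1 - q ^ ((n:ℝ)+1)) := by
    rw [qDigamma, if_pos hq1]; ring
  rw [hfun, hval]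
  exact hsum

lemma part1_lt (hq0 : 0 < q) (hq1 : q < 1) :
    MonotoneOn (fun x : ℝ => x * qDigamma q x) (Ici 1) := by
  intro x hx y hy hxy
  have hx0 : (0:ℝ) < x := lt_of_lt_of_le one_pos hx
  have hy0 : (0:ℝ) < y := lt_of_lt_of_le one_pos hy
  have hX := hasSum_xpsi hq0 hq1 hx0
  have hY := hasSum_xpsi hq0 hq1 hy0
  simp only
  rw [← hX.tsum_eq, ← hY.tsum_eq]
  exact Summable.tsum_le_tsum (fun n => F1_mono hq0 hq1 n hx hy hxy) hX.summable hY.summable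

lemma psi_mono_lt (hq0 : 0 < q) (hq1 : q < 1) : MonotoneOn (qDigamma q) (Ici 1) := by
  intro x hx y hy hxy
  have hx0 : (0:ℝ) < x := lt_of_lt_of_le one_pos hx
  have hy0 : (0:ℝ) < y := lt_of_lt_of_le one_pos hy
  have hS : (∑' n : ℕ, q ^ (((n:ℝ)+1)*y) / (1 - q ^ ((n:ℝ)+1))) ≤
      ∑' n : ℕ, q ^ (((n:ℝ)+1)*x) / (1 - q ^ ((n:ℝ)+1)) := by
    apply Summable.tsum_le_tsum _ (summable_S hq0 hq1 hy0) (summable_S hq0 hq1 hx0)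
    intro n
    have hnum := qpow_le hq0 hq1 (mul_le_mul_of_nonneg_left hxy (nq_pos n).le)
    have h1c := one_sub_qpow_pos hq0 hq1 (nq_pos n)
    gcongr
  have hlq : Real.log q < 0 := Real.log_neg hq0 hq1
  simp only [qDigamma, if_pos hq1]
  have := mul_le_mul_of_nonpos_left hS hlq.le
  linarith

lemma neg_log_one_sub_le {a b : ℝ} (ha0 : 0 < a) (hab : a ≤ b) (hb1 : b < 1) :
    -Real.log (1 - a) ≤ a / (1 - b) := by
  have h1a : 0 < 1 - a := by linarith
  have h1b : 0 < 1 - b := by linarith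
  have h := Real.log_le_sub_one_of_pos (inv_pos.2 h1a)
  rw [Real.log_inv] at h
  have h2 : (1 - a)⁻¹ - 1 = a / (1 - a) := by field_simp; ring
  have h3 : a / (1 - a) ≤ a / (1 - b) :=
    div_le_div_of_nonneg_left ha0.le h1b (by linarith)
  linarith

lemma summable_neg_log (hq0 : 0 < q) (hq1 : q < 1) {y : ℝ} (hy : 0 < y) :
    Summable (fun n : ℕ => -Real.log (1 - q ^ ((n:ℝ)+y))) := by
  have hr1 : q ^ y < 1 := qpow_lt_one hq0 hq1 hy
  apply Summable.of_nonneg_of_le (f := fun n : ℕ => (q ^ y * q ^ n) / (1 - q ^ y))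
  · intro n
    have hp : (0:ℝ) < (n:ℝ) + y := by positivity
    have := qpow_lt_one hq0 hq1 hp
    have h0 : (0:ℝ) < 1 - q ^ ((n:ℝ)+y) := by linarith
    simp only [neg_nonneg]
    exact Real.log_nonpos h0.le (by linarith [Real.rpow_pos_of_pos hq0 ((n:ℝ)+y)])
  · intro n
    have hp : (0:ℝ) < (n:ℝ) + y := by positivity
    have ha0 : 0 < q ^ ((n:ℝ)+y) := Real.rpow_pos_of_pos hq0 _
    have hab : q ^ ((n:ℝ)+y) ≤ q ^ y :=
      qpow_le hq0 hq1 (by linarith [Nat.cast_nonneg (α := ℝ) n])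
    have h5 := neg_log_one_sub_le ha0 hab hr1
    have hnum : q ^ ((n:ℝ)+y) = q ^ y * q ^ n := by
      rw [Real.rpow_add hq0, Real.rpow_natCast, mul_comm]
    rw [← hnum]
    exact h5
  · exact ((summable_geometric_of_lt_one hq0.le hq1).mul_left _).div_const _

noncomputable def Gq (q x : ℝ) : ℝ :=
  (1 - x) * Real.log (1 - q) +
    ∑' n : ℕ, (Real.log (1 - q ^ ((n:ℝ)+1)) - Real.log (1 - q ^ ((n:ℝ)+x)))

lemma summable_logdiff (hq0 : 0 < q) (hq1 : q < 1) {y : ℝ} (hy : 0 < y) :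
    Summable (fun n : ℕ =>
      Real.log (1 - q ^ ((n:ℝ)+1)) - Real.log (1 - q ^ ((n:ℝ)+y))) := by
  have h1 := summable_neg_log hq0 hq1 one_pos
  have h2 := summable_neg_log hq0 hq1 hy
  have := h2.sub h1
  apply this.congr
  intro n
  ring

lemma one_sub_qpow_add_pos (hq0 : 0 < q) (hq1 : q < 1) {y : ℝ} (hy : 0 < y) (n : ℕ) :
    0 < 1 - q ^ ((n:ℝ)+y) :=
  one_sub_qpow_pos hq0 hq1 (by positivity)

lemma qGamma_eq_exp (hq0 : 0 < q) (hq1 : q < 1) {x : ℝ} (hx : 0 < x) :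
    qGamma q x = Real.exp (Gq q x) := by
  have h1q : (0:ℝ) < 1 - q := by linarith
  have hprod : (∏' n : ℕ, (1 - q ^ ((n:ℝ)+1)) / (1 - q ^ ((n:ℝ)+x))) =
      Real.exp (∑' n : ℕ,
        (Real.log (1 - q ^ ((n:ℝ)+1)) - Real.log (1 - q ^ ((n:ℝ)+x)))) := by
    have hfn : ∀ (a : {y : ℝ // 0 < y}) (n : ℕ),
        0 < (1 - q ^ ((n:ℝ)+1)) / (1 - q ^ ((n:ℝ)+(a:ℝ))) := fun a n =>
      div_pos (one_sub_qpow_add_pos hq0 hq1 one_pos n) (one_sub_qpow_add_pos hq0 hq1 a.2 n)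
    have hlog : ∀ (a : {y : ℝ // 0 < y}) (n : ℕ),
        Real.log ((1 - q ^ ((n:ℝ)+1)) / (1 - q ^ ((n:ℝ)+(a:ℝ)))) =
          Real.log (1 - q ^ ((n:ℝ)+1)) - Real.log (1 - q ^ ((n:ℝ)+(a:ℝ))) := fun a n =>
      Real.log_div (one_sub_qpow_add_pos hq0 hq1 one_pos n).ne'
        (one_sub_qpow_add_pos hq0 hq1 a.2 n).ne'
    have hsum : ∀ a : {y : ℝ // 0 < y}, Summable (fun n : ℕ =>
        Real.log ((1 - q ^ ((n:ℝ)+1)) / (1 - q ^ ((n:ℝ)+(a:ℝ))))) := by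
      intro a
      exact (summable_logdiff hq0 hq1 a.2).congr (fun n => (hlog a n).symm)
    have h2 := Real.rexp_tsum_eq_tprod
      (f := fun n : ℕ => (1 - q ^ ((n:ℝ)+1)) / (1 - q ^ ((n:ℝ)+x))) (hfn ⟨x, hx⟩) (hsum ⟨x, hx⟩)
    rw [← h2]
    congr 1
    exact tsum_congr (fun n => hlog ⟨x, hx⟩ n)
  rw [qGamma, if_pos hq1, Gq, Real.exp_add, hprod]
  congr 1
  rw [Real.rpow_def_of_pos h1q]
  ring_nf

lemma V_eq_S (hq0 : 0 < q) (hq1 : q < 1) {x : ℝ} (hx : 0 < x) :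
    ∑' n : ℕ, q ^ ((n:ℝ)+x) / (1 - q ^ ((n:ℝ)+x)) =
      ∑' k : ℕ, q ^ (((k:ℝ)+1)*x) / (1 - q ^ ((k:ℝ)+1)) := by
  have hF1 : ∀ n : ℕ, HasSum (fun k : ℕ => (q ^ ((n:ℝ)+x)) ^ (k+1))
      (q ^ ((n:ℝ)+x) / (1 - q ^ ((n:ℝ)+x))) := by
    intro n
    have ha0 : 0 < q ^ ((n:ℝ)+x) := Real.rpow_pos_of_pos hq0 _
    have ha1 : q ^ ((n:ℝ)+x) < 1 := qpow_lt_one hq0 hq1 (by positivity)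
    have h2 := (hasSum_geometric_of_lt_one ha0.le ha1).mul_left (q ^ ((n:ℝ)+x))
    have hfun : (fun k : ℕ => (q ^ ((n:ℝ)+x)) ^ (k+1)) =
        fun k : ℕ => q ^ ((n:ℝ)+x) * (q ^ ((n:ℝ)+x)) ^ k := by
      funext k; rw [pow_succ']
    rw [hfun, div_eq_mul_inv]
    exact h2
  have hterm : ∀ k n : ℕ, (q ^ ((n:ℝ)+x)) ^ (k+1) =
      (q ^ ((k:ℝ)+1)) ^ n * q ^ (((k:ℝ)+1)*x) := by
    intro k n
    rw [← Real.rpow_natCast (q ^ ((n:ℝ)+x)) (k+1), ← Real.rpow_mul hq0.le]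
    rw [← Real.rpow_natCast (q ^ ((k:ℝ)+1)) n, ← Real.rpow_mul hq0.le]
    rw [← Real.rpow_add hq0]
    congr 1
    push_cast
    ring
  have hF2 : ∀ k : ℕ, HasSum (fun n : ℕ => (q ^ ((n:ℝ)+x)) ^ (k+1))
      (q ^ (((k:ℝ)+1)*x) / (1 - q ^ ((k:ℝ)+1))) := by
    intro k
    have hb0 : 0 < q ^ ((k:ℝ)+1) := Real.rpow_pos_of_pos hq0 _
    have hb1 : q ^ ((k:ℝ)+1) < 1 := qpow_lt_one hq0 hq1 (nq_pos k)
    have h2 := (hasSum_geometric_of_lt_one hb0.le hb1).mul_right (q ^ (((k:ℝ)+1)*x))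
    have hfun : (fun n : ℕ => (q ^ ((n:ℝ)+x)) ^ (k+1)) =
        fun n : ℕ => (q ^ ((k:ℝ)+1)) ^ n * q ^ (((k:ℝ)+1)*x) := by
      funext n; rw [hterm k n]
    rw [hfun]
    simpa [div_eq_mul_inv, mul_comm] using h2
  have hnonneg : ∀ p : ℕ × ℕ, 0 ≤ (q ^ ((p.1:ℝ)+x)) ^ (p.2+1) := fun p =>
    pow_nonneg (Real.rpow_pos_of_pos hq0 _).le _
  have hsummable : Summable (Function.uncurry
      (fun n k : ℕ => (q ^ ((n:ℝ)+x)) ^ (k+1))) := by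
    refine (summable_prod_of_nonneg ?_).mpr ⟨fun n => (hF1 n).summable, ?_⟩
    · intro p; exact hnonneg p
    · apply (summable_V hq0 hq1 hx).congr
      intro n
      exact ((hF1 n).tsum_eq).symm
  calc ∑' n : ℕ, q ^ ((n:ℝ)+x) / (1 - q ^ ((n:ℝ)+x))
      = ∑' (n : ℕ) (k : ℕ), (q ^ ((n:ℝ)+x)) ^ (k+1) :=
        tsum_congr (fun n => (hF1 n).tsum_eq.symm)
    _ = ∑' (k : ℕ) (n : ℕ), (q ^ ((n:ℝ)+x)) ^ (k+1) := (Summable.tsum_comm hsummable).symm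
    _ = ∑' k : ℕ, q ^ (((k:ℝ)+1)*x) / (1 - q ^ ((k:ℝ)+1)) :=
        tsum_congr (fun k => (hF2 k).tsum_eq)

lemma hasDerivAt_Gq (hq0 : 0 < q) (hq1 : q < 1) {x : ℝ} (hx : 1/2 < x) :
    HasDerivAt (Gq q) (qDigamma q x) x := by
  have hx0 : (0:ℝ) < x := lt_trans one_half_pos hx
  have hr0 : 0 < q ^ (1/2 : ℝ) := Real.rpow_pos_of_pos hq0 _
  have hr1 : q ^ (1/2 : ℝ) < 1 := qpow_lt_one hq0 hq1 one_half_pos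
  have h1r : 0 < 1 - q ^ (1/2 : ℝ) := by linarith
  have hlq : Real.log q < 0 := Real.log_neg hq0 hq1
  have htsum : HasDerivAt (fun z : ℝ => ∑' n : ℕ,
      (Real.log (1 - q ^ ((n:ℝ)+1)) - Real.log (1 - q ^ ((n:ℝ)+z))))
      (∑' n : ℕ, Real.log q * q ^ ((n:ℝ)+x) / (1 - q ^ ((n:ℝ)+x))) x := by
    apply hasDerivAt_tsum_of_isPreconnected
      (u := fun n : ℕ => (-Real.log q) * (q ^ (1/2:ℝ) / (1 - q ^ (1/2:ℝ))) * q ^ n)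
      (g := fun (n : ℕ) (z : ℝ) =>
        Real.log (1 - q ^ ((n:ℝ)+1)) - Real.log (1 - q ^ ((n:ℝ)+z)))
      (g' := fun (n : ℕ) (y : ℝ) => Real.log q * q ^ ((n:ℝ)+y) / (1 - q ^ ((n:ℝ)+y)))
      ?_ isOpen_Ioi (convex_Ioi (1/2:ℝ)).isPreconnected ?_ ?_
      (show (1:ℝ) ∈ Ioi (1/2:ℝ) by norm_num) ?_ (show x ∈ Ioi (1/2:ℝ) from hx)
    · exact ((summable_geometric_of_lt_one hq0.le hq1).mul_left _)
    · intro n y hy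
      have hy0 : (0:ℝ) < y := lt_trans one_half_pos hy
      have h1 := hasDerivAt_rpow_add hq0 (n:ℝ) y
      have h2 := h1.const_sub 1
      have h3 := h2.log (one_sub_qpow_add_pos hq0 hq1 hy0 n).ne'
      have h4 := (hasDerivAt_const y (Real.log (1 - q ^ ((n:ℝ)+1)))).sub h3
      convert h4 using 1
      exacts [rfl, by ring]
    · intro n y hy
      have hy2 : (1/2:ℝ) ≤ (n:ℝ) + y := by
        have := Nat.cast_nonneg (α := ℝ) n; linarith [mem_Ioi.1 hy]
      have ha0 : 0 < q ^ ((n:ℝ)+y) := Real.rpow_pos_of_pos hq0 _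
      have har : q ^ ((n:ℝ)+y) ≤ q ^ (1/2:ℝ) := qpow_le hq0 hq1 hy2
      have haq : q ^ ((n:ℝ)+y) ≤ q ^ n * q ^ (1/2:ℝ) := by
        have h6 : q ^ ((n:ℝ)+y) ≤ q ^ ((n:ℝ)+1/2) := qpow_le hq0 hq1 (by linarith [mem_Ioi.1 hy])
        have he : q ^ ((n:ℝ)+(1/2:ℝ)) = q ^ n * q ^ (1/2:ℝ) := by
          rw [Real.rpow_add hq0, Real.rpow_natCast]
        linarith [he.le, he.ge]
      have h1a : 0 < 1 - q ^ ((n:ℝ)+y) := by linarith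
      rw [Real.norm_eq_abs, abs_div, abs_mul, abs_of_pos ha0, abs_of_pos h1a,
        abs_of_neg hlq]
      have hmain : -Real.log q * q ^ ((n:ℝ)+y) / (1 - q ^ ((n:ℝ)+y)) ≤
          -Real.log q * (q ^ n * q ^ (1/2:ℝ)) / (1 - q ^ (1/2:ℝ)) := by
        apply div_le_div₀ (mul_nonneg (by linarith) (by positivity)) _ h1r (by linarith)
        exact mul_le_mul_of_nonneg_left haq (by linarith)
      calc -Real.log q * q ^ ((n:ℝ)+y) / (1 - q ^ ((n:ℝ)+y))
          ≤ -Real.log q * (q ^ n * q ^ (1/2:ℝ)) / (1 - q ^ (1/2:ℝ)) := hmain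
        _ = -Real.log q * (q ^ (1/2:ℝ) / (1 - q ^ (1/2:ℝ))) * q ^ n := by ring
    · have hzero : (fun n : ℕ => Real.log (1 - q ^ ((n:ℝ)+1)) -
          Real.log (1 - q ^ ((n:ℝ)+(1:ℝ)))) = fun _ => (0:ℝ) := by
        funext n; rw [sub_self]
      rw [hzero]
      exact summable_zero
  have haff : HasDerivAt (fun z : ℝ => (1-z) * Real.log (1-q)) (-Real.log (1-q)) x := by
    simpa using ((hasDerivAt_const x (1:ℝ)).sub (hasDerivAt_id x)).mul_const (Real.log (1-q))
  have htotal := haff.add htsum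
  have hval : -Real.log (1-q) + ∑' n : ℕ, Real.log q * q ^ ((n:ℝ)+x) / (1 - q ^ ((n:ℝ)+x))
      = qDigamma q x := by
    have h1 : (fun n : ℕ => Real.log q * q ^ ((n:ℝ)+x) / (1 - q ^ ((n:ℝ)+x))) =
        fun n : ℕ => Real.log q * (q ^ ((n:ℝ)+x) / (1 - q ^ ((n:ℝ)+x))) := by
      funext n; ring
    rw [h1, tsum_mul_left, V_eq_S hq0 hq1 hx0, qDigamma, if_pos hq1]
  rw [← hval]
  exact htotal

lemma qGamma_pos (hq0 : 0 < q) (hq1 : q < 1) {x : ℝ} (hx : 0 < x) : 0 < qGamma q x := by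
  rw [qGamma_eq_exp hq0 hq1 hx]; exact Real.exp_pos _

lemma hasDerivAt_qGamma_lt (hq0 : 0 < q) (hq1 : q < 1) {x : ℝ} (hx : 1/2 < x) :
    HasDerivAt (qGamma q) (qGamma q x * qDigamma q x) x := by
  have hx0 : (0:ℝ) < x := lt_trans one_half_pos hx
  have h := (hasDerivAt_Gq hq0 hq1 hx).exp
  have heq : (fun y => Real.exp (Gq q y)) =ᶠ[nhds x] qGamma q := by
    filter_upwards [isOpen_Ioi.mem_nhds (show x ∈ Ioi (0:ℝ) from hx0)] with y hy
    exact (qGamma_eq_exp hq0 hq1 hy).symm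
  have h2 := h.congr_of_eventuallyEq heq.symm
  rwa [← qGamma_eq_exp hq0 hq1 hx0] at h2

theorem main_lt (hq0 : 0 < q) (hq1 : q < 1) :
    MonotoneOn (fun x : ℝ => x * qDigamma q x) (Ici 1) ∧
      MonotoneOn (fun x : ℝ => x * deriv (qGamma q) x) (Ici 1) :=
  ⟨part1_lt hq0 hq1, aux_mono_mul_deriv (qGamma q) (qDigamma q)
    (fun x hx => hasDerivAt_qGamma_lt hq0 hq1 (lt_of_lt_of_le (by norm_num) hx))
    (fun x hx => qGamma_pos hq0 hq1 (lt_of_lt_of_le one_pos hx))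
    (psi_mono_lt hq0 hq1) (part1_lt hq0 hq1)⟩

section qgt
variable (hq1 : 1 < q)
include hq1

lemma hq0' : 0 < q := lt_trans one_pos hq1
lemma hp0' : 0 < q⁻¹ := inv_pos.2 (lt_trans one_pos hq1)
lemma hp1' : q⁻¹ < 1 := by
  rw [inv_lt_one_iff₀]
  right; exact hq1

lemma qDigamma_gt_eq (x : ℝ) :
    qDigamma q x = qDigamma q⁻¹ x + Real.log q * (x - 3/2) := by
  have hq0 : 0 < q := hq0' hq1
  have hp1 : q⁻¹ < 1 := hp1' hq1
  have hterm : ∀ a : ℝ, q ^ (-a) = q⁻¹ ^ a := fun a => by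
    rw [Real.inv_rpow hq0.le, ← Real.rpow_neg hq0.le]
  have hlog : Real.log (q-1) = Real.log (1 - q⁻¹) + Real.log q := by
    have h1 : q - 1 = (1 - q⁻¹) * q := by field_simp
    rw [h1, Real.log_mul (show (0:ℝ) < 1 - q⁻¹ by linarith).ne' hq0.ne']
  have hlogp : Real.log q⁻¹ = -Real.log q := Real.log_inv q
  rw [qDigamma, if_neg (by linarith), if_pos hq1, qDigamma, if_pos hp1]
  have hsums : (∑' n : ℕ, q ^ (-(((n:ℝ)+1)*x)) / (1 - q ^ (-((n:ℝ)+1)))) =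
      ∑' n : ℕ, q⁻¹ ^ (((n:ℝ)+1)*x) / (1 - q⁻¹ ^ ((n:ℝ)+1)) :=
    tsum_congr fun n => by rw [hterm, hterm]
  rw [hsums, hlog, hlogp]
  ring

lemma qGamma_gt_eq :
    qGamma q = fun x => qGamma q⁻¹ x * Real.exp (Real.log q * ((x-1)*(x-2)/2)) := by
  funext x
  have hq0 : 0 < q := hq0' hq1
  have hp1 : q⁻¹ < 1 := hp1' hq1
  have h1p : (0:ℝ) < 1 - q⁻¹ := sub_pos.2 hp1
  have hterm : ∀ a : ℝ, q ^ (-a) = q⁻¹ ^ a := fun a => by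
    rw [Real.inv_rpow hq0.le, ← Real.rpow_neg hq0.le]
  rw [qGamma, if_neg (by linarith), if_pos hq1, qGamma, if_pos hp1]
  have hprod : (∏' n : ℕ, (1 - q ^ (-((n:ℝ)+1))) / (1 - q ^ (-((n:ℝ)+x)))) =
      ∏' n : ℕ, (1 - q⁻¹ ^ ((n:ℝ)+1)) / (1 - q⁻¹ ^ ((n:ℝ)+x)) :=
    tprod_congr fun n => by rw [hterm, hterm]
  rw [hprod]
  have h1 : q - 1 = (1 - q⁻¹) * q := by field_simp
  rw [h1, Real.mul_rpow h1p.le hq0.le]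
  have h2 : q ^ ((1:ℝ)-x) * q ^ (x*(x-1)/2) = Real.exp (Real.log q * ((x-1)*(x-2)/2)) := by
    rw [← Real.rpow_add hq0, Real.rpow_def_of_pos hq0]
    congr 1; ring
  calc (1 - q⁻¹) ^ (1-x) * q ^ (1-x) * q ^ (x*(x-1)/2) *
        ∏' n : ℕ, (1 - q⁻¹ ^ ((n:ℝ)+1)) / (1 - q⁻¹ ^ ((n:ℝ)+x))
      = (1 - q⁻¹) ^ (1-x) * (∏' n : ℕ, (1 - q⁻¹ ^ ((n:ℝ)+1)) / (1 - q⁻¹ ^ ((n:ℝ)+x))) *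
        (q ^ ((1:ℝ)-x) * q ^ (x*(x-1)/2)) := by ring
    _ = _ := by rw [h2]

lemma psi_mono_gt : MonotoneOn (qDigamma q) (Ici 1) := by
  intro x hx y hy hxy
  have h1 := psi_mono_lt (hp0' hq1) (hp1' hq1) hx hy hxy
  have hL : 0 ≤ Real.log q := Real.log_nonneg hq1.le
  rw [qDigamma_gt_eq hq1, qDigamma_gt_eq hq1]
  have h2 : Real.log q * (x - 3/2) ≤ Real.log q * (y - 3/2) :=
    mul_le_mul_of_nonneg_left (by linarith [mem_Ici.1 hx, mem_Ici.1 hy, hxy]) hL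
  linarith

lemma part1_gt : MonotoneOn (fun x : ℝ => x * qDigamma q x) (Ici 1) := by
  intro x hx y hy hxy
  have h1 := part1_lt (hp0' hq1) (hp1' hq1) hx hy hxy
  simp only at h1 ⊢
  have hL : 0 ≤ Real.log q := Real.log_nonneg hq1.le
  have hx1 : (1:ℝ) ≤ x := mem_Ici.1 hx
  have hy1 : (1:ℝ) ≤ y := mem_Ici.1 hy
  have hpoly : x * (x - 3/2) ≤ y * (y - 3/2) := by nlinarith
  have h2 := mul_le_mul_of_nonneg_left hpoly hL
  rw [qDigamma_gt_eq hq1, qDigamma_gt_eq hq1]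
  have e1 : ∀ t : ℝ, t * (qDigamma q⁻¹ t + Real.log q * (t - 3/2)) =
      t * qDigamma q⁻¹ t + Real.log q * (t * (t - 3/2)) := fun t => by ring
  rw [e1, e1]
  exact add_le_add h1 h2

lemma qGamma_pos_gt {x : ℝ} (hx : 0 < x) : 0 < qGamma q x := by
  simp only [qGamma_gt_eq hq1]
  exact mul_pos (qGamma_pos (hp0' hq1) (hp1' hq1) hx) (Real.exp_pos _)

lemma hasDerivAt_qGamma_gt {x : ℝ} (hx : 1/2 < x) :
    HasDerivAt (qGamma q) (qGamma q x * qDigamma q x) x := by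
  have hG := hasDerivAt_qGamma_lt (hp0' hq1) (hp1' hq1) hx
  have hpoly : HasDerivAt (fun y : ℝ => Real.log q * ((y-1)*(y-2)/2))
      (Real.log q * (x - 3/2)) x := by
    have h1 : HasDerivAt (fun y : ℝ => (y-1)*(y-2)/2) (x - 3/2) x := by
      have h0 := (((hasDerivAt_id x).sub_const 1).mul ((hasDerivAt_id x).sub_const 2)).div_const 2
      refine h0.congr_deriv ?_
      simp only [id_eq]
      ring
    exact h1.const_mul (Real.log q)
  have hE := hpoly.exp
  have hprod := hG.mul hE
  have key : HasDerivAt (fun y => qGamma q⁻¹ y * Real.exp (Real.log q * ((y-1)*(y-2)/2)))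
      (qGamma q x * qDigamma q x) x := by
    refine hprod.congr_deriv ?_
    simp only [qGamma_gt_eq hq1, qDigamma_gt_eq hq1]
    ring
  exact key.congr_of_eventuallyEq
    (Filter.Eventually.of_forall (fun y => congrFun (qGamma_gt_eq hq1) y))

theorem main_gt :
    MonotoneOn (fun x : ℝ => x * qDigamma q x) (Ici 1) ∧
      MonotoneOn (fun x : ℝ => x * deriv (qGamma q) x) (Ici 1) :=
  ⟨part1_gt hq1, aux_mono_mul_deriv (qGamma q) (qDigamma q)
    (fun x hx => hasDerivAt_qGamma_gt hq1 (lt_of_lt_of_le (by norm_num) hx))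
    (fun x hx => qGamma_pos_gt hq1 (lt_of_lt_of_le one_pos hx))
    (psi_mono_gt hq1) (part1_gt hq1)⟩

end qgt

section qone

local notation "γ" => Real.eulerMascheroniConstant

lemma summable_base_sq : Summable (fun n : ℕ => 1 / ((n:ℝ)+1) ^ 2) := by
  have h : Summable (fun n : ℕ => 1 / (n:ℝ) ^ 2) :=
    summable_one_div_nat_pow.2 one_lt_two
  have h2 := h.comp_injective (add_left_injective 1)
  apply h2.congr
  intro n
  simp only [Function.comp_apply]
  push_cast
  ring_nf

lemma Wterm_nonneg {x : ℝ} (hx : 0 < x) (n : ℕ) :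
    0 ≤ x / ((n:ℝ)+1) - Real.log (1 + x / ((n:ℝ)+1)) := by
  have hm : (0:ℝ) < (n:ℝ)+1 := nq_pos n
  have ht : 0 < x / ((n:ℝ)+1) := by positivity
  have := Real.log_le_sub_one_of_pos (show (0:ℝ) < 1 + x/((n:ℝ)+1) by linarith)
  linarith

lemma W_partial (x : ℝ) (hx : 0 < x) (n : ℕ) :
    ∑ i ∈ Finset.range n, (x / ((i:ℝ)+1) - Real.log (1 + x / ((i:ℝ)+1))) =
      Real.BohrMollerup.logGammaSeq x n + Real.log x +
        x * ((harmonic n : ℝ) - Real.log n) := by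
  induction n with
  | zero => simp [Real.BohrMollerup.logGammaSeq]
  | succ n ih =>
    rw [Finset.sum_range_succ, ih]
    have hfac : Real.log ((Nat.factorial (n+1) : ℝ)) =
        Real.log ((n:ℝ)+1) + Real.log ((Nat.factorial n : ℝ)) := by
      rw [Nat.factorial_succ]
      push_cast
      rw [Real.log_mul (by positivity) (by positivity)]
    have hharm : (harmonic (n+1) : ℝ) = (harmonic n : ℝ) + 1/((n:ℝ)+1) := by
      rw [harmonic_succ]
      push_cast
      ring
    have hlogterm : Real.log (1 + x/((n:ℝ)+1)) =
        Real.log (x + ((n:ℝ)+1)) - Real.log ((n:ℝ)+1) := by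
      rw [← Real.log_div (by positivity) (by positivity)]
      congr 1
      field_simp
      ring
    have hgs : Real.BohrMollerup.logGammaSeq x (n+1) =
        Real.BohrMollerup.logGammaSeq x n + x * (Real.log ((n:ℝ)+1) - Real.log n) +
          Real.log ((n:ℝ)+1) - Real.log (x + ((n:ℝ)+1)) := by
      simp only [Real.BohrMollerup.logGammaSeq]
      rw [Finset.sum_range_succ (f := fun m : ℕ => Real.log (x + m)) (n+1), hfac]
      push_cast
      ring
    rw [hgs, hharm, hlogterm]
    push_cast
    ring

lemma W_hasSum {x : ℝ} (hx : 0 < x) :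
    HasSum (fun n : ℕ => x / ((n:ℝ)+1) - Real.log (1 + x / ((n:ℝ)+1)))
      (Real.log (Real.Gamma x) + Real.log x + γ * x) := by
  rw [hasSum_iff_tendsto_nat_of_nonneg (Wterm_nonneg hx)]
  have h1 := Real.BohrMollerup.tendsto_log_gamma hx
  have h2 := Real.tendsto_harmonic_sub_log
  have h3 := (h1.add (tendsto_const_nhds (x := Real.log x))).add (h2.const_mul x)
  have heq : (fun n : ℕ => Real.BohrMollerup.logGammaSeq x n + Real.log x +
      x * ((harmonic n : ℝ) - Real.log n)) =
      fun n : ℕ => ∑ i ∈ Finset.range n, (x / ((i:ℝ)+1) - Real.log (1 + x / ((i:ℝ)+1))) := by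
    funext n
    exact (W_partial x hx n).symm
  rw [heq] at h3
  convert h3 using 2
  ring

lemma Dterm_nonneg {x : ℝ} (hx : 0 < x) (n : ℕ) :
    0 ≤ 1/((n:ℝ)+1) - 1/((n:ℝ)+1+x) := by
  have h1 : (0:ℝ) < (n:ℝ)+1 := nq_pos n
  have h2 : (0:ℝ) < (n:ℝ)+1+x := by linarith
  have := one_div_le_one_div_of_le h1 (by linarith : (n:ℝ)+1 ≤ (n:ℝ)+1+x)
  linarith

lemma Dterm_le {x : ℝ} (hx : 0 < x) (n : ℕ) :
    1/((n:ℝ)+1) - 1/((n:ℝ)+1+x) ≤ x * (1/((n:ℝ)+1)^2) := by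
  have h1 : (0:ℝ) < (n:ℝ)+1 := nq_pos n
  have h2 : (0:ℝ) < (n:ℝ)+1+x := by linarith
  have he : 1/((n:ℝ)+1) - 1/((n:ℝ)+1+x) = x / (((n:ℝ)+1)*((n:ℝ)+1+x)) := by
    field_simp
    ring
  rw [he]
  have hle : ((n:ℝ)+1)^2 ≤ ((n:ℝ)+1)*((n:ℝ)+1+x) := by nlinarith
  calc x / (((n:ℝ)+1)*((n:ℝ)+1+x)) ≤ x / ((n:ℝ)+1)^2 :=
        div_le_div_of_nonneg_left hx.le (by positivity) hle
    _ = x * (1/((n:ℝ)+1)^2) := by ring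

lemma summable_D {x : ℝ} (hx : 0 < x) :
    Summable (fun n : ℕ => 1/((n:ℝ)+1) - 1/((n:ℝ)+1+x)) :=
  Summable.of_nonneg_of_le (Dterm_nonneg hx) (Dterm_le hx) (summable_base_sq.mul_left x)

lemma hasDerivAt_logGamma {x : ℝ} (hx : 0 < x) :
    HasDerivAt (fun y : ℝ => Real.log (Real.Gamma y))
      (-γ - 1/x + ∑' n : ℕ, (1/((n:ℝ)+1) - 1/((n:ℝ)+1+x))) x := by
  have hxIoo : x ∈ Ioo (0:ℝ) (x+1) := ⟨hx, by linarith⟩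
  have htsum : HasDerivAt (fun z : ℝ => ∑' n : ℕ,
      (z / ((n:ℝ)+1) - Real.log (1 + z / ((n:ℝ)+1))))
      (∑' n : ℕ, (1/((n:ℝ)+1) - 1/((n:ℝ)+1+x))) x := by
    apply hasDerivAt_tsum_of_isPreconnected
      (u := fun n : ℕ => (x+1) * (1/((n:ℝ)+1)^2))
      (g := fun (n : ℕ) (z : ℝ) => z / ((n:ℝ)+1) - Real.log (1 + z / ((n:ℝ)+1)))
      (g' := fun (n : ℕ) (z : ℝ) => 1/((n:ℝ)+1) - 1/((n:ℝ)+1+z))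
      (summable_base_sq.mul_left (x+1)) isOpen_Ioo
      (convex_Ioo (0:ℝ) (x+1)).isPreconnected ?_ ?_ hxIoo (W_hasSum hx).summable hxIoo
    · intro n z hz
      have h1 : (0:ℝ) < (n:ℝ)+1 := nq_pos n
      have hz0 : 0 < z := hz.1
      have hpos : (0:ℝ) < 1 + z/((n:ℝ)+1) := by positivity
      have hd1 : HasDerivAt (fun w : ℝ => w / ((n:ℝ)+1)) (1/((n:ℝ)+1)) z := by
        simpa using (hasDerivAt_id z).div_const ((n:ℝ)+1)
      have hd2 := (hd1.const_add 1).log hpos.ne'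
      have hval : 1/((n:ℝ)+1) / (1 + z/((n:ℝ)+1)) = 1/((n:ℝ)+1+z) := by
        rw [div_div]
        congr 1
        field_simp
      have := hd1.sub hd2
      rw [hval] at this
      exact this
    · intro n z hz
      have h1 : (0:ℝ) < (n:ℝ)+1 := nq_pos n
      have hz0 : 0 < z := hz.1
      have hz1 : z ≤ x + 1 := hz.2.le
      rw [Real.norm_eq_abs, abs_of_nonneg (Dterm_nonneg hz0 n)]
      calc 1/((n:ℝ)+1) - 1/((n:ℝ)+1+z) ≤ z * (1/((n:ℝ)+1)^2) := Dterm_le hz0 n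
        _ ≤ (x+1) * (1/((n:ℝ)+1)^2) := by
            apply mul_le_mul_of_nonneg_right hz1 (by positivity)
  have hlin : HasDerivAt (fun z : ℝ => -γ * z - Real.log z) (-γ - 1/x) x := by
    have h1 := (hasDerivAt_id x).const_mul (-γ)
    have h2 := Real.hasDerivAt_log hx.ne'
    have h3 := h1.sub h2
    refine h3.congr_deriv ?_
    rw [mul_one, one_div]
  have hLG := hlin.add htsum
  have hfe : (fun y : ℝ => Real.log (Real.Gamma y)) =ᶠ[nhds x]
      (fun z : ℝ => (-γ * z - Real.log z) + ∑' n : ℕ,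
        (z / ((n:ℝ)+1) - Real.log (1 + z / ((n:ℝ)+1)))) := by
    filter_upwards [isOpen_Ioi.mem_nhds (show x ∈ Ioi (0:ℝ) from hx)] with z hz
    have := (W_hasSum (show (0:ℝ) < z from hz)).tsum_eq
    rw [this]
    ring
  have := hLG.congr_of_eventuallyEq hfe
  convert this using 1

lemma qDigamma_one {x : ℝ} (hx : 0 < x) :
    qDigamma 1 x = -γ - 1/x + ∑' n : ℕ, (1/((n:ℝ)+1) - 1/((n:ℝ)+1+x)) := by
  rw [qDigamma, if_neg (lt_irrefl 1), if_neg (lt_irrefl 1)]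
  exact (hasDerivAt_logGamma hx).deriv

lemma hasSum_telescope : HasSum (fun n : ℕ => 1/((n:ℝ)+1) - 1/((n:ℝ)+2)) 1 := by
  have hnn : ∀ n : ℕ, 0 ≤ 1/((n:ℝ)+1) - 1/((n:ℝ)+2) := by
    intro n
    have h1 : (0:ℝ) < (n:ℝ)+1 := nq_pos n
    have := one_div_le_one_div_of_le h1 (by linarith : (n:ℝ)+1 ≤ (n:ℝ)+2)
    linarith
  rw [hasSum_iff_tendsto_nat_of_nonneg hnn]
  have hps : ∀ n : ℕ, ∑ i ∈ Finset.range n, (1/((i:ℝ)+1) - 1/((i:ℝ)+2)) =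
      1 - 1/((n:ℝ)+1) := by
    intro n
    have h0 := Finset.sum_range_sub' (f := fun i : ℕ => 1/((i:ℝ)+1)) n
    have h2 : ∑ i ∈ Finset.range n, (1/((i:ℝ)+1) - 1/((i:ℝ)+2)) =
        ∑ i ∈ Finset.range n, (1/((i:ℝ)+1) - 1/(((i+1:ℕ):ℝ)+1)) := by
      apply Finset.sum_congr rfl
      intro i _
      push_cast
      ring_nf
    rw [h2, h0]
    norm_num
  simp only [hps]
  have := tendsto_one_div_add_atTop_nhds_zero_nat (𝕜 := ℝ)
  have h2 := tendsto_const_nhds (x := (1:ℝ)) |>.sub this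
  simpa using h2

lemma part1_one : MonotoneOn (fun x : ℝ => x * qDigamma 1 x) (Ici 1) := by
  intro x hx y hy hxy
  have hx1 : (1:ℝ) ≤ x := mem_Ici.1 hx
  have hy1 : (1:ℝ) ≤ y := mem_Ici.1 hy
  have hx0 : (0:ℝ) < x := lt_of_lt_of_le one_pos hx1
  have hy0 : (0:ℝ) < y := lt_of_lt_of_le one_pos hy1
  simp only [qDigamma_one hx0, qDigamma_one hy0]
  have hSx : Summable (fun n : ℕ => x * (1/((n:ℝ)+1) - 1/((n:ℝ)+1+x))) :=
    (summable_D hx0).mul_left x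
  have hSy : Summable (fun n : ℕ => y * (1/((n:ℝ)+1) - 1/((n:ℝ)+1+y))) :=
    (summable_D hy0).mul_left y
  have htel : Summable (fun n : ℕ => (y - x) * (1/((n:ℝ)+1) - 1/((n:ℝ)+2))) :=
    hasSum_telescope.summable.mul_left _
  have key : ∑' n : ℕ, (x * (1/((n:ℝ)+1) - 1/((n:ℝ)+1+x)) +
      (y - x) * (1/((n:ℝ)+1) - 1/((n:ℝ)+2))) ≤
      ∑' n : ℕ, y * (1/((n:ℝ)+1) - 1/((n:ℝ)+1+y)) := by
    apply Summable.tsum_le_tsum _ (hSx.add htel) hSy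
    intro n
    have h1 : (0:ℝ) < (n:ℝ)+1 := nq_pos n
    have h2 : (0:ℝ) < (n:ℝ)+1+x := by linarith
    have h3 : (0:ℝ) < (n:ℝ)+1+y := by linarith
    have e1 : x * (1/((n:ℝ)+1) - 1/((n:ℝ)+1+x)) = x^2 / (((n:ℝ)+1)*((n:ℝ)+1+x)) := by
      field_simp
      ring
    have e2 : y * (1/((n:ℝ)+1) - 1/((n:ℝ)+1+y)) = y^2 / (((n:ℝ)+1)*((n:ℝ)+1+y)) := by
      field_simp
      ring
    have e3 : (1:ℝ)/((n:ℝ)+1) - 1/((n:ℝ)+2) = 1/(((n:ℝ)+1)*((n:ℝ)+2)) := by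
      field_simp
      ring
    rw [e1, e2, e3, mul_one_div]
    rw [div_add_div _ _ (by positivity) (by positivity),
      div_le_div_iff₀ (by positivity) (by positivity)]
    set m : ℝ := (n:ℝ)+1 with hm
    have hm1 : (1:ℝ) ≤ m := by simp only [hm]; linarith [Nat.cast_nonneg (α := ℝ) n]
    have hn2 : ((n:ℝ)+2) = m + 1 := by simp only [hm]; ring
    rw [hn2]
    have hq0 : (0:ℝ) ≤ m*(x+y-1)+x*y := by nlinarith
    have hprod : 0 ≤ m^2 * ((y-x) * (m*(x+y-1)+x*y)) :=
      mul_nonneg (sq_nonneg m) (mul_nonneg (sub_nonneg.2 hxy) hq0)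
    nlinarith [hprod]
  have hsplit : ∑' n : ℕ, (x * (1/((n:ℝ)+1) - 1/((n:ℝ)+1+x)) +
      (y - x) * (1/((n:ℝ)+1) - 1/((n:ℝ)+2))) =
      (∑' n : ℕ, x * (1/((n:ℝ)+1) - 1/((n:ℝ)+1+x))) + (y - x) := by
    rw [Summable.tsum_add hSx htel]
    congr 1
    rw [(hasSum_telescope.mul_left (y-x)).tsum_eq, mul_one]
  rw [hsplit] at key
  have htx : ∑' n : ℕ, x * (1/((n:ℝ)+1) - 1/((n:ℝ)+1+x)) =
      x * ∑' n : ℕ, (1/((n:ℝ)+1) - 1/((n:ℝ)+1+x)) := tsum_mul_left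
  have hty : ∑' n : ℕ, y * (1/((n:ℝ)+1) - 1/((n:ℝ)+1+y)) =
      y * ∑' n : ℕ, (1/((n:ℝ)+1) - 1/((n:ℝ)+1+y)) := tsum_mul_left
  rw [htx, hty] at key
  have hγ : γ < 1 := lt_trans Real.eulerMascheroniConstant_lt_two_thirds (by norm_num)
  have hgle : γ * (y - x) ≤ y - x := by nlinarith
  have hx1' : x * (1/x) = 1 := mul_one_div_cancel hx0.ne'
  have hy1' : y * (1/y) = 1 := mul_one_div_cancel hy0.ne'
  nlinarith [key, hgle]

lemma psi_mono_one : MonotoneOn (qDigamma 1) (Ici 1) := by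
  intro x hx y hy hxy
  have hx1 : (1:ℝ) ≤ x := mem_Ici.1 hx
  have hy1 : (1:ℝ) ≤ y := mem_Ici.1 hy
  have hx0 : (0:ℝ) < x := lt_of_lt_of_le one_pos hx1
  have hy0 : (0:ℝ) < y := lt_of_lt_of_le one_pos hy1
  rw [qDigamma_one hx0, qDigamma_one hy0]
  have h1 : 1/y ≤ 1/x := one_div_le_one_div_of_le hx0 hxy
  have h2 : ∑' n : ℕ, (1/((n:ℝ)+1) - 1/((n:ℝ)+1+x)) ≤
      ∑' n : ℕ, (1/((n:ℝ)+1) - 1/((n:ℝ)+1+y)) := by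
    apply Summable.tsum_le_tsum _ (summable_D hx0) (summable_D hy0)
    intro n
    have hn : (0:ℝ) < (n:ℝ)+1 := nq_pos n
    have := one_div_le_one_div_of_le (by linarith : (0:ℝ) < (n:ℝ)+1+x)
      (by linarith : (n:ℝ)+1+x ≤ (n:ℝ)+1+y)
    linarith
  linarith

lemma qGamma_one : qGamma 1 = Real.Gamma := by
  funext x
  rw [qGamma, if_neg (lt_irrefl 1), if_neg (lt_irrefl 1)]

lemma hasDerivAt_qGamma_one {x : ℝ} (hx : 0 < x) :
    HasDerivAt (qGamma 1) (qGamma 1 x * qDigamma 1 x) x := by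
  have h := (hasDerivAt_logGamma hx).exp
  have hfe : qGamma 1 =ᶠ[nhds x] (fun y : ℝ => Real.exp (Real.log (Real.Gamma y))) := by
    filter_upwards [isOpen_Ioi.mem_nhds (show x ∈ Ioi (0:ℝ) from hx)] with z hz
    rw [qGamma_one, Real.exp_log (Real.Gamma_pos_of_pos hz)]
  have h2 := h.congr_of_eventuallyEq hfe
  rw [Real.exp_log (Real.Gamma_pos_of_pos hx)] at h2
  rw [qGamma_one] at h2 ⊢
  rw [qDigamma_one hx]
  exact h2

theorem main_one :
    MonotoneOn (fun x : ℝ => x * qDigamma 1 x) (Ici 1) ∧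
      MonotoneOn (fun x : ℝ => x * deriv (qGamma 1) x) (Ici 1) :=
  ⟨part1_one, aux_mono_mul_deriv (qGamma 1) (qDigamma 1)
    (fun x hx => hasDerivAt_qGamma_one (lt_of_lt_of_le one_pos hx))
    (fun x hx => by rw [qGamma_one]; exact Real.Gamma_pos_of_pos (lt_of_lt_of_le one_pos hx))
    psi_mono_one part1_one⟩

end qone

/-- For every `q > 0`, the functions `x ↦ x·ψ_q(x)` and `x ↦ x·Γ_q'(x)` are
increasing (monotone nondecreasing) on `[1,∞)`. -/
theorem mul_qDigamma_and_mul_deriv_qGamma_monotoneOn (q : ℝ) (hq : 0 < q) :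
    MonotoneOn (fun x : ℝ => x * qDigamma q x) (Set.Ici 1) ∧
      MonotoneOn (fun x : ℝ => x * deriv (qGamma q) x) (Set.Ici 1) := by
  rcases lt_trichotomy q 1 with h | h | h
  · exact main_lt hq h
  · subst h; exact main_one
  · exact main_gt h
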